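/- The normed space c₀^λ(F̂) with norm ‖x‖ = sup_n |F̄_n(x)| is separable. -/

import Mathlib

open Filter Finset

noncomputable def fibR : ℕ → ℝ
  | 0 => 1
  | 1 => 1
  | (n + 2) => fibR (n + 1) + fibR n

noncomputable def Fhat (x : ℕ → ℝ) (n : ℕ) : ℝ :=
  fibR n / fibR (n + 1) * x n - fibR (n + 1) / fibR n * (if n = 0 then 0 else x (n - 1))

noncomputable def Fbar (Λ : ℕ → ℝ) (x : ℕ → ℝ) (n : ℕ) : ℝ :=
  (1 / Λ n) * ∑ k ∈ Finset.range (n + 1),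
    (Λ k - if k = 0 then 0 else Λ (k - 1)) *
      (fibR k / fibR (k + 1) * x k -
        fibR (k + 1) / fibR k * (if k = 0 then 0 else x (k - 1)))

lemma fibR_pos : ∀ n, 0 < fibR n
  | 0 => by norm_num [fibR]
  | 1 => by norm_num [fibR]
  | (n + 2) => by
      rw [fibR]
      exact add_pos (fibR_pos (n + 1)) (fibR_pos n)

noncomputable def yinv (v : ℕ → ℝ) : ℕ → ℝ
  | 0 => v 0
  | (k + 1) => (v (k + 1) + fibR (k + 2) / fibR (k + 1) * yinv v k) *
      (fibR (k + 2) / fibR (k + 1))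

lemma Fhat_yinv (v : ℕ → ℝ) : ∀ k, Fhat (yinv v) k = v k
  | 0 => by norm_num [Fhat, yinv, fibR]
  | (k + 1) => by
      have h1 := (fibR_pos (k + 1)).ne'
      have h2 := (fibR_pos (k + 2)).ne'
      simp only [Fhat, yinv, Nat.succ_ne_zero, if_false, Nat.add_sub_cancel]
      field_simp
      ring

lemma Fhat_sub (x y : ℕ → ℝ) (k : ℕ) :
    Fhat (fun i => x i - y i) k = Fhat x k - Fhat y k := by
  simp only [Fhat]
  split_ifs <;> ring

noncomputable def dL (Λ : ℕ → ℝ) (k : ℕ) : ℝ :=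
  Λ k - if k = 0 then 0 else Λ (k - 1)

lemma Fbar_eq' (Λ x : ℕ → ℝ) (n : ℕ) :
    Fbar Λ x n = (1 / Λ n) * ∑ k ∈ range (n + 1), dL Λ k * Fhat x k := rfl

lemma dL_pos (Λ : ℕ → ℝ) (hmono : StrictMono Λ) (hpos : ∀ k, 0 < Λ k) (k : ℕ) :
    0 < dL Λ k := by
  cases k with
  | zero => simpa [dL] using hpos 0
  | succ m =>
      simp only [dL, Nat.succ_ne_zero, if_false, Nat.add_sub_cancel]
      exact sub_pos.mpr (hmono (Nat.lt_succ_self m))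

lemma sum_dL (Λ : ℕ → ℝ) (n : ℕ) : ∑ k ∈ range (n + 1), dL Λ k = Λ n := by
  induction n with
  | zero => simp [dL]
  | succ m ih =>
      rw [Finset.sum_range_succ, ih]
      simp [dL]

lemma sum_bound (Λ : ℕ → ℝ) (hmono : StrictMono Λ) (hpos : ∀ k, 0 < Λ k)
    (g : ℕ → ℝ) (c : ℝ) (n : ℕ) (hg : ∀ k ≤ n, |g k| ≤ c) :
    |∑ k ∈ range (n + 1), dL Λ k * g k| ≤ c * Λ n := by
  calc |∑ k ∈ range (n + 1), dL Λ k * g k|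
      ≤ ∑ k ∈ range (n + 1), |dL Λ k * g k| := Finset.abs_sum_le_sum_abs _ _
    _ ≤ ∑ k ∈ range (n + 1), dL Λ k * c := by
        refine Finset.sum_le_sum fun k hk => ?_
        rw [abs_mul, abs_of_pos (dL_pos Λ hmono hpos k)]
        exact mul_le_mul_of_nonneg_left
          (hg k (by simpa [Nat.lt_succ_iff] using hk))
          (dL_pos Λ hmono hpos k).le
    _ = c * Λ n := by rw [← Finset.sum_mul, sum_dL, mul_comm]

theorem c0lambdaF_separable (Λ : ℕ → ℝ) (hmono : StrictMono Λ) (hpos : ∀ k, 0 < Λ k)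
    (hlim : Tendsto Λ atTop atTop) :
    ∃ D : Set (ℕ → ℝ), D.Countable ∧
      (∀ y ∈ D, Tendsto (Fbar Λ y) atTop (nhds 0)) ∧
      ∀ x : ℕ → ℝ, Tendsto (Fbar Λ x) atTop (nhds 0) →
        ∀ ε : ℝ, 0 < ε → ∃ y ∈ D, ∀ n, |Fbar Λ (fun i => x i - y i) n| ≤ ε := by
  refine ⟨Set.range (fun l : List ℚ => yinv (fun k => ((l.getD k 0 : ℚ) : ℝ))),
    Set.countable_range _, ?_, ?_⟩
  · -- every element of D has Fbar tending to 0
    rintro y ⟨l, rfl⟩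
    set v : ℕ → ℝ := fun k => ((l.getD k 0 : ℚ) : ℝ) with hvdef
    have hv0 : ∀ k, l.length ≤ k → v k = 0 := by
      intro k hk
      simp [hvdef, List.getD_eq_getElem?_getD, List.getElem?_eq_none hk]
    have hF : ∀ n, Fbar Λ (yinv v) n =
        (1 / Λ n) * ∑ k ∈ range (n + 1), dL Λ k * v k := by
      intro n
      rw [Fbar_eq']
      congr 1
      exact Finset.sum_congr rfl fun k _ => by rw [Fhat_yinv]
    set C : ℝ := ∑ k ∈ range l.length, dL Λ k * v k with hC
    have key : ∀ n, l.length ≤ n → Fbar Λ (yinv v) n = (Λ n)⁻¹ * C := by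
      intro n hn
      rw [hF, one_div, hC]
      congr 1
      exact (Finset.sum_subset (Finset.range_subset_range.mpr (by omega))
        (fun i _ hi => by
          rw [hv0 i (by simpa using hi), mul_zero])).symm
    have htend : Tendsto (fun n => (Λ n)⁻¹ * C) atTop (nhds 0) := by
      simpa using (tendsto_inv_atTop_zero.comp hlim).mul_const C
    exact Tendsto.congr' (eventually_atTop.mpr ⟨l.length, fun n hn => (key n hn).symm⟩) htend
  · -- density
    intro x hx ε hε
    obtain ⟨N, hN⟩ := (Metric.tendsto_atTop.mp hx) (ε / 3) (by positivity)
    have hN' : ∀ n, N ≤ n → |Fbar Λ x n| ≤ ε / 3 := by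
      intro n hn
      have := hN n hn
      rw [Real.dist_eq, sub_zero] at this
      linarith
    choose q hq using fun k => exists_rat_near (Fhat x k) (show (0 : ℝ) < ε / 3 by positivity)
    set l : List ℚ := List.ofFn (fun i : Fin (N + 1) => q i) with hldef
    set v : ℕ → ℝ := fun k => ((l.getD k 0 : ℚ) : ℝ) with hvdef
    have hlen : l.length = N + 1 := by simp [hldef]
    have hvle : ∀ k, k ≤ N → v k = q k := by
      intro k hk
      have hk' : k < l.length := by omega
      rw [hvdef]
      simp only [List.getD_eq_getElem?_getD, List.getElem?_eq_getElem hk']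
      simp only [hldef, List.getElem_ofFn]
      simp
    have hvgt : ∀ k, N < k → v k = 0 := by
      intro k hk
      simp [hvdef, List.getD_eq_getElem?_getD,
        List.getElem?_eq_none (show l.length ≤ k by omega)]
    refine ⟨yinv v, ⟨l, rfl⟩, ?_⟩
    intro n
    have hΛn := hpos n
    have hz : ∀ k, Fhat (fun i => x i - yinv v i) k = Fhat x k - v k := by
      intro k
      rw [Fhat_sub, Fhat_yinv]
    have hFz : Fbar Λ (fun i => x i - yinv v i) n =
        (1 / Λ n) * ∑ k ∈ range (n + 1), dL Λ k * (Fhat x k - v k) := by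
      rw [Fbar_eq']
      congr 1
      exact Finset.sum_congr rfl fun k _ => by rw [hz]
    set S : ℕ → ℝ := fun m => ∑ k ∈ range (m + 1), dL Λ k * Fhat x k with hSdef
    have hSabs : ∀ m, N ≤ m → |S m| ≤ Λ m * (ε / 3) := by
      intro m hm
      have h1 : Fbar Λ x m = (1 / Λ m) * S m := Fbar_eq' Λ x m
      have h2 : S m = Λ m * Fbar Λ x m := by
        rw [h1, ← mul_assoc, mul_one_div, div_self (hpos m).ne', one_mul]
      rw [h2, abs_mul, abs_of_pos (hpos m)]
      exact mul_le_mul_of_nonneg_left (hN' m hm) (hpos m).le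
    rcases le_or_gt n N with hn | hn
    · -- n ≤ N
      have hb : |∑ k ∈ range (n + 1), dL Λ k * (Fhat x k - v k)| ≤ (ε / 3) * Λ n := by
        refine sum_bound Λ hmono hpos _ _ n fun k hk => ?_
        rw [hvle k (le_trans hk hn)]
        exact (hq k).le
      rw [hFz, abs_mul, abs_of_pos (by positivity : (0:ℝ) < 1 / Λ n)]
      calc (1 / Λ n) * |∑ k ∈ range (n + 1), dL Λ k * (Fhat x k - v k)|
          ≤ (1 / Λ n) * ((ε / 3) * Λ n) :=
            mul_le_mul_of_nonneg_left hb (by positivity)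
        _ = ε / 3 := by field_simp
        _ ≤ ε := by linarith
    · -- N < n
      have hsplit : ∑ k ∈ range (n + 1), dL Λ k * (Fhat x k - v k) =
          (∑ k ∈ range (N + 1), dL Λ k * (Fhat x k - v k)) + (S n - S N) := by
        rw [← Finset.sum_range_add_sum_Ico _ (by omega : N + 1 ≤ n + 1)]
        congr 1
        have : ∀ k ∈ Finset.Ico (N + 1) (n + 1),
            dL Λ k * (Fhat x k - v k) = dL Λ k * Fhat x k := by
          intro k hk
          rw [hvgt k (by simp at hk; omega), sub_zero]
        rw [Finset.sum_congr rfl this, Finset.sum_Ico_eq_sub _ (by omega : N + 1 ≤ n + 1)]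
      have hT : |∑ k ∈ range (N + 1), dL Λ k * (Fhat x k - v k)| ≤ (ε / 3) * Λ N := by
        refine sum_bound Λ hmono hpos _ _ N fun k hk => ?_
        rw [hvle k hk]
        exact (hq k).le
      have hSn := hSabs n hn.le
      have hSN := hSabs N le_rfl
      have hΛle : Λ N ≤ Λ n := (hmono.monotone hn.le)
      have htot : |∑ k ∈ range (n + 1), dL Λ k * (Fhat x k - v k)| ≤ Λ n * ε := by
        rw [hsplit]
        have h1 : |(∑ k ∈ range (N + 1), dL Λ k * (Fhat x k - v k)) + (S n - S N)| ≤
            |∑ k ∈ range (N + 1), dL Λ k * (Fhat x k - v k)| + |S n| + |S N| := by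
          have := abs_add_le (∑ k ∈ range (N + 1), dL Λ k * (Fhat x k - v k)) (S n - S N)
          have h2 := abs_sub (S n) (S N)
          calc |(∑ k ∈ range (N + 1), dL Λ k * (Fhat x k - v k)) + (S n - S N)|
              ≤ |∑ k ∈ range (N + 1), dL Λ k * (Fhat x k - v k)| + |S n - S N| := this
            _ ≤ _ := by
                have := abs_sub_abs_le_abs_sub (S n) (S N)
                have h3 : |S n - S N| ≤ |S n| + |S N| := abs_sub _ _
                linarith
        nlinarith [hpos N, hpos n]
      rw [hFz, abs_mul, abs_of_pos (by positivity : (0:ℝ) < 1 / Λ n)]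
      calc (1 / Λ n) * |∑ k ∈ range (n + 1), dL Λ k * (Fhat x k - v k)|
          ≤ (1 / Λ n) * (Λ n * ε) := mul_le_mul_of_nonneg_left htot (by positivity)
        _ = ε := by field_simp
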